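/- Let P and Q be probability measures on [1/2 - r, 1/2 + r] ⊆ [0,1] whose first L moments match, and let X | p ~ Binomial(t, p) with p ~ P, and Y | q ~ Binomial(t, q) with q ~ Q. Then the total variation distance between the laws of X and Y satisfies TV(X,Y) ≤ 2 Σ_{k=L+1}^∞ (Σ_{j=0}^t |B_j^{(k)}(1/2)/k!|) r^k, where B_j is the j-th Bernstein polynomial of degree t. -/

import Mathlib

open MeasureTheory Polynomial Finset

/-- The `j`-th Bernstein basis polynomial of degree `t`. -/
noncomputable def bern (t j : ℕ) (x : ℝ) : ℝ := (t.choose j : ℝ) * x ^ j * (1 - x) ^ (t - j)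

lemma bern_eq_eval (t j : ℕ) (x : ℝ) : bern t j x = (bernsteinPolynomial ℝ t j).eval x := by
  simp [bern, bernsteinPolynomial]

lemma iteratedDeriv_eval (f : ℝ[X]) (k : ℕ) :
    iteratedDeriv k (fun x => f.eval x) = fun x => (derivative^[k] f).eval x := by
  induction k with
  | zero => simp
  | succ n ih =>
    rw [iteratedDeriv_succ, ih, Function.iterate_succ_apply']
    funext x
    exact Polynomial.deriv _

lemma natDegree_bp (t j : ℕ) : (bernsteinPolynomial ℝ t j).natDegree ≤ t := by
  by_cases h : j ≤ t
  · unfold bernsteinPolynomial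
    refine le_trans (natDegree_mul_le) ?_
    have h1 : ((Nat.choose t j : ℝ[X]) * X ^ j).natDegree ≤ j := by
      refine le_trans (natDegree_mul_le) ?_
      simp [natDegree_natCast]
    have h2 : ((1 - X : ℝ[X]) ^ (t - j)).natDegree ≤ t - j := by
      refine le_trans (natDegree_pow_le) ?_
      have : ((1 : ℝ[X]) - X).natDegree ≤ 1 :=
        le_trans (natDegree_sub_le _ _) (by simp)
      calc (t - j) * ((1:ℝ[X]) - X).natDegree ≤ (t - j) * 1 := by
            exact Nat.mul_le_mul_left _ this
        _ = t - j := by ring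
    omega
  · have hc : t.choose j = 0 := Nat.choose_eq_zero_of_lt (by omega)
    unfold bernsteinPolynomial
    rw [hc]; simp

lemma taylor_eval (f : ℝ[X]) (a x : ℝ) (n : ℕ) (h : f.natDegree ≤ n) :
    f.eval x = ∑ k ∈ Finset.range (n+1),
      ((derivative^[k] f).eval a / k.factorial) * (x - a)^k := by
  conv_lhs => rw [← sum_taylor_eq f a]
  rw [Polynomial.sum_over_range' _ (fun n => by simp) (n+1)
    (by rw [natDegree_taylor]; omega)]
  rw [Polynomial.eval_finset_sum]
  refine Finset.sum_congr rfl fun k _ => ?_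
  have hc : (taylor a f).coeff k = (derivative^[k] f).eval a / k.factorial := by
    rw [taylor_coeff]
    have := congrFun (Polynomial.factorial_smul_hasseDeriv (R := ℝ) k) f
    have heval : (k.factorial : ℝ) * (hasseDeriv k f).eval a = (derivative^[k] f).eval a := by
      rw [← this]; simp [nsmul_eq_mul]
    field_simp
    linarith [heval]
  simp [hc]

lemma bern_iteratedDeriv (t j k : ℕ) (x : ℝ) :
    iteratedDeriv k (bern t j) x = (derivative^[k] (bernsteinPolynomial ℝ t j)).eval x := by
  have : bern t j = fun x => (bernsteinPolynomial ℝ t j).eval x := funext (bern_eq_eval t j)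
  rw [this, iteratedDeriv_eval]

lemma bern_deriv_vanish (t j k : ℕ) (hk : t < k) (x : ℝ) :
    iteratedDeriv k (bern t j) x = 0 := by
  rw [bern_iteratedDeriv, Polynomial.iterate_derivative_eq_zero (lt_of_le_of_lt (natDegree_bp t j) hk)]
  simp

lemma bern_taylor (t j : ℕ) (x : ℝ) :
    bern t j x = ∑ k ∈ Finset.range (t+1),
      (iteratedDeriv k (bern t j) (1/2) / k.factorial) * (x - 1/2)^k := by
  rw [bern_eq_eval, taylor_eval (bernsteinPolynomial ℝ t j) (1/2) x t (natDegree_bp t j)]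
  refine Finset.sum_congr rfl fun k _ => ?_
  rw [bern_iteratedDeriv]

lemma integ_aux {S : Set ℝ} (μ : Measure ℝ) [IsProbabilityMeasure μ]
    (hμ : ∀ᵐ p ∂μ, p ∈ S) (f : ℝ → ℝ) (hf : Continuous f) (C : ℝ)
    (hC : ∀ p ∈ S, |f p| ≤ C) : Integrable f μ := by
  refine Integrable.mono' (integrable_const C) hf.aestronglyMeasurable ?_
  filter_upwards [hμ] with p hp
  simpa [Real.norm_eq_abs] using hC p hp

lemma abs_integral_aux {S : Set ℝ} (μ : Measure ℝ) [IsProbabilityMeasure μ]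
    (hμ : ∀ᵐ p ∂μ, p ∈ S) (f : ℝ → ℝ) (C : ℝ)
    (hC : ∀ p ∈ S, |f p| ≤ C) : |∫ p, f p ∂μ| ≤ C := by
  have h := norm_integral_le_of_norm_le (f := f) (μ := μ) (integrable_const C) ?_
  · simpa [Real.norm_eq_abs] using h
  · filter_upwards [hμ] with p hp
    simpa [Real.norm_eq_abs] using hC p hp

theorem tv_fingerprint_taylor_bound (t L : ℕ) (r : ℝ) (hr0 : 0 ≤ r) (hr : r ≤ 1 / 2)
    (P Q : Measure ℝ) [IsProbabilityMeasure P] [IsProbabilityMeasure Q]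
    (hP : P ((Set.Icc (1 / 2 - r) (1 / 2 + r))ᶜ) = 0)
    (hQ : Q ((Set.Icc (1 / 2 - r) (1 / 2 + r))ᶜ) = 0)
    (hmom : ∀ l : ℕ, 1 ≤ l → l ≤ L → ∫ p, p ^ l ∂P = ∫ q, q ^ l ∂Q) :
    ∑ s ∈ Finset.range (t + 1), |(∫ p, bern t s p ∂P) - ∫ q, bern t s q ∂Q|
      ≤ 2 * ∑' k : ℕ,
          (∑ j ∈ Finset.range (t + 1),
              |iteratedDeriv (k + L + 1) (bern t j) (1 / 2) / ((k + L + 1).factorial : ℝ)|)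
            * r ^ (k + L + 1) := by
  set S : Set ℝ := Set.Icc (1 / 2 - r) (1 / 2 + r) with hSdef
  have hPS : ∀ᵐ p ∂P, p ∈ S := by rw [MeasureTheory.ae_iff]; exact hP
  have hQS : ∀ᵐ q ∂Q, q ∈ S := by rw [MeasureTheory.ae_iff]; exact hQ
  have hmem : ∀ p ∈ S, |p - 1 / 2| ≤ r ∧ |p| ≤ 1 := by
    intro p hp
    obtain ⟨h1, h2⟩ := hp
    refine ⟨abs_le.mpr ⟨by linarith, by linarith⟩, abs_le.mpr ⟨by linarith, by linarith⟩⟩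
  -- integrability of monomials times constants
  have hint : ∀ (μ : Measure ℝ) [IsProbabilityMeasure μ], (∀ᵐ p ∂μ, p ∈ S) →
      ∀ (k : ℕ) (a : ℝ), Integrable (fun p => p ^ k * a) μ := by
    intro μ _ hμ k a
    refine integ_aux μ hμ _ (by continuity) (1 * |a|) (fun p hp => ?_)
    rw [abs_mul]
    gcongr
    rw [abs_pow]
    exact pow_le_one₀ (abs_nonneg _) (hmem p hp).2
  -- matching raw moments up to L
  have hraw : ∀ i : ℕ, i ≤ L → ∫ p, (p : ℝ) ^ i ∂P = ∫ q, (q : ℝ) ^ i ∂Q := by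
    intro i hi
    rcases Nat.eq_zero_or_pos i with h0 | h1
    · subst h0; simp
    · exact hmom i h1 hi
  -- matching centered moments up to L
  have hMeq : ∀ k : ℕ, k ≤ L → ∫ p, (p - 1 / 2) ^ k ∂P = ∫ q, (q - 1 / 2) ^ k ∂Q := by
    intro k hk
    have hexp : ∀ x : ℝ, (x - 1 / 2) ^ k
        = ∑ i ∈ Finset.range (k + 1), x ^ i * ((-(1 / 2 : ℝ)) ^ (k - i) * (k.choose i : ℝ)) := by
      intro x
      rw [sub_eq_add_neg, add_pow]
      exact Finset.sum_congr rfl fun i _ => by ring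
    have key : ∀ (μ : Measure ℝ) [IsProbabilityMeasure μ], (∀ᵐ p ∂μ, p ∈ S) →
        ∫ p, (p - 1 / 2) ^ k ∂μ
          = ∑ i ∈ Finset.range (k + 1),
              (∫ p, (p : ℝ) ^ i ∂μ) * ((-(1 / 2 : ℝ)) ^ (k - i) * (k.choose i : ℝ)) := by
      intro μ _ hμ
      calc ∫ p, (p - 1 / 2) ^ k ∂μ
          = ∫ p, ∑ i ∈ Finset.range (k + 1),
              p ^ i * ((-(1 / 2 : ℝ)) ^ (k - i) * (k.choose i : ℝ)) ∂μ := by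
            simp_rw [hexp]
        _ = ∑ i ∈ Finset.range (k + 1),
              ∫ p, p ^ i * ((-(1 / 2 : ℝ)) ^ (k - i) * (k.choose i : ℝ)) ∂μ :=
            integral_finset_sum _ (fun i _ => hint μ hμ i _)
        _ = _ := Finset.sum_congr rfl fun i _ => integral_mul_const _ _
    rw [key P hPS, key Q hQS]
    refine Finset.sum_congr rfl fun i hi => ?_
    rw [hraw i (le_trans (Nat.lt_succ_iff.mp (Finset.mem_range.mp hi)) hk)]
  -- centered moment bounds
  have hMb : ∀ (μ : Measure ℝ) [IsProbabilityMeasure μ], (∀ᵐ p ∂μ, p ∈ S) →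
      ∀ k : ℕ, |∫ p, (p - 1 / 2) ^ k ∂μ| ≤ r ^ k := by
    intro μ _ hμ k
    refine abs_integral_aux μ hμ _ (r ^ k) (fun p hp => ?_)
    rw [abs_pow]
    exact pow_le_pow_left₀ (abs_nonneg _) (hmem p hp).1 k
  set c : ℕ → ℕ → ℝ := fun s k => iteratedDeriv k (bern t s) (1 / 2) / (k.factorial : ℝ)
    with hcdef
  -- the key identity for each s
  have hDs : ∀ s : ℕ, (∫ p, bern t s p ∂P) - ∫ q, bern t s q ∂Q
      = ∑ k ∈ Finset.Ico (L + 1) (t + 1),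
          c s k * ((∫ p, (p - 1 / 2) ^ k ∂P) - ∫ q, (q - 1 / 2) ^ k ∂Q) := by
    intro s
    have hintc : ∀ (μ : Measure ℝ) [IsProbabilityMeasure μ], (∀ᵐ p ∂μ, p ∈ S) →
        ∀ (k : ℕ) (a : ℝ), Integrable (fun p => a * (p - 1 / 2) ^ k) μ := by
      intro μ _ hμ k a
      refine integ_aux μ hμ _ (by continuity) (|a| * r ^ k) (fun p hp => ?_)
      rw [abs_mul, abs_pow]
      gcongr
      exact (hmem p hp).1
    have hI : ∀ (μ : Measure ℝ) [IsProbabilityMeasure μ], (∀ᵐ p ∂μ, p ∈ S) →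
        ∫ p, bern t s p ∂μ
          = ∑ k ∈ Finset.range (t + 1), c s k * ∫ p, (p - 1 / 2) ^ k ∂μ := by
      intro μ _ hμ
      calc ∫ p, bern t s p ∂μ
          = ∫ p, ∑ k ∈ Finset.range (t + 1), c s k * (p - 1 / 2) ^ k ∂μ := by
            congr 1; funext p; exact bern_taylor t s p
        _ = ∑ k ∈ Finset.range (t + 1), ∫ p, c s k * (p - 1 / 2) ^ k ∂μ :=
            integral_finset_sum _ (fun k _ => hintc μ hμ k _)
        _ = _ := Finset.sum_congr rfl fun k _ => integral_const_mul _ _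
    rw [hI P hPS, hI Q hQS, ← Finset.sum_sub_distrib]
    simp_rw [← mul_sub]
    refine (Finset.sum_subset ?_ ?_).symm
    · intro x hx
      simp only [Finset.mem_Ico] at hx
      simp only [Finset.mem_range]
      omega
    · intro x hx1 hx2
      simp only [Finset.mem_range] at hx1
      simp only [Finset.mem_Ico] at hx2
      rw [hMeq x (by omega), sub_self, mul_zero]
  calc ∑ s ∈ Finset.range (t + 1), |(∫ p, bern t s p ∂P) - ∫ q, bern t s q ∂Q|
      ≤ ∑ s ∈ Finset.range (t + 1), ∑ k ∈ Finset.Ico (L + 1) (t + 1),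
          |c s k| * (2 * r ^ k) := by
        refine Finset.sum_le_sum fun s _ => ?_
        rw [hDs s]
        refine le_trans (Finset.abs_sum_le_sum_abs _ _) (Finset.sum_le_sum fun k _ => ?_)
        rw [abs_mul]
        refine mul_le_mul_of_nonneg_left ?_ (abs_nonneg _)
        calc |(∫ p, (p - 1 / 2) ^ k ∂P) - ∫ q, (q - 1 / 2) ^ k ∂Q|
            ≤ |∫ p, (p - 1 / 2) ^ k ∂P| + |∫ q, (q - 1 / 2) ^ k ∂Q| := abs_sub _ _
          _ ≤ r ^ k + r ^ k := add_le_add (hMb P hPS k) (hMb Q hQS k)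
          _ = 2 * r ^ k := by ring
    _ = 2 * ∑ k ∈ Finset.Ico (L + 1) (t + 1),
          (∑ j ∈ Finset.range (t + 1), |c j k|) * r ^ k := by
        rw [Finset.sum_comm, Finset.mul_sum]
        refine Finset.sum_congr rfl fun k _ => ?_
        rw [Finset.sum_mul, Finset.mul_sum]
        refine Finset.sum_congr rfl fun j _ => by ring
    _ = 2 * ∑ i ∈ Finset.range (t - L),
          (∑ j ∈ Finset.range (t + 1), |c j (i + L + 1)|) * r ^ (i + L + 1) := by
        congr 1
        rw [Finset.sum_Ico_eq_sum_range]
        have h1 : t + 1 - (L + 1) = t - L := by omega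
        rw [h1]
        refine Finset.sum_congr rfl fun i _ => ?_
        have h2 : L + 1 + i = i + L + 1 := by omega
        rw [h2]
    _ ≤ 2 * ∑' k : ℕ,
          (∑ j ∈ Finset.range (t + 1), |c j (k + L + 1)|) * r ^ (k + L + 1) := by
        refine mul_le_mul_of_nonneg_left ?_ (by norm_num)
        refine Summable.sum_le_tsum _ (fun i _ => ?_) ?_
        · exact mul_nonneg (Finset.sum_nonneg fun j _ => abs_nonneg _) (pow_nonneg hr0 _)
        · refine summable_of_ne_finset_zero (s := Finset.range (t + 1)) fun i hi => ?_
          have hti : t < i + L + 1 := by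
            simp only [Finset.mem_range, not_lt] at hi
            omega
          have hz : ∀ j, iteratedDeriv (i + L + 1) (bern t j) (1 / 2 : ℝ) = 0 :=
            fun j => bern_deriv_vanish t j _ hti _
          refine mul_eq_zero_of_left ?_ _
          refine Finset.sum_eq_zero fun j _ => ?_
          simp only [hcdef, abs_eq_zero]
          rw [bern_deriv_vanish t j _ hti _, zero_div]
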